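/- Let Ā ∈ {0,*}^{n×n} with state digraph D(Ā) = (X, E), and let m = n − |M*| be the number of right-unmatched vertices of a maximum matching M* of B(X, X, E). If B̄ ∈ {0,*}^{n×p} is a dedicated input pattern such that (Ā, B̄) is structurally controllable, then p ≥ m. -/

import Mathlib

/-- A real matrix `A` realizes the Boolean structural pattern `P` if `A` vanishes
wherever `P` is zero (`false`). -/
def Realizes {m k : ℕ} (A : Matrix (Fin m) (Fin k) ℝ) (P : Matrix (Fin m) (Fin k) Bool) : Prop :=
  ∀ i j, P i j = false → A i j = 0

/-- The controllability matrix `[B, AB, …, A^{n-1}B]`. -/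
def ctrbMatrix {n p : ℕ} (A : Matrix (Fin n) (Fin n) ℝ) (B : Matrix (Fin n) (Fin p) ℝ) :
    Matrix (Fin n) (Fin n × Fin p) ℝ :=
  Matrix.of fun i jk => (A ^ (jk.1 : ℕ) * B) i jk.2

/-- Structural controllability of a pair of patterns `(Ā, B̄)`: some realization
has full-rank controllability matrix. -/
def StructurallyControllable {n p : ℕ} (Ab : Matrix (Fin n) (Fin n) Bool)
    (Bb : Matrix (Fin n) (Fin p) Bool) : Prop :=
  ∃ (A : Matrix (Fin n) (Fin n) ℝ) (B : Matrix (Fin n) (Fin p) ℝ),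
    Realizes A Ab ∧ Realizes B Bb ∧ (ctrbMatrix A B).rank = n

/-- A dedicated input pattern: every column has exactly one nonzero entry. -/
def Dedicated {n p : ℕ} (Bb : Matrix (Fin n) (Fin p) Bool) : Prop :=
  ∀ j, ∃! i, Bb i j = true

/-- Edge `x_j → x_i` of the state digraph `D(Ā)` (present iff `Ā_{ij} ≠ 0`). -/
def stateEdge {n : ℕ} (Ab : Matrix (Fin n) (Fin n) Bool) (j i : Fin n) : Prop :=
  Ab i j = true

/-- Edge set of the bipartite graph `B(X, X, E)` associated with `D(Ā)`:
`(j, i)` is an edge from left `x_j` to right `x_i` iff `x_j → x_i` in `D(Ā)`. -/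
def stateEdgeFinset {n : ℕ} (Ab : Matrix (Fin n) (Fin n) Bool) : Finset (Fin n × Fin n) :=
  Finset.univ.filter fun e => Ab e.2 e.1 = true

/-- A matching of a bipartite graph with edge set `E`: a subset of `E` in which
no two edges share a left endpoint or share a right endpoint. -/
def IsMatching {α β : Type*} (E M : Finset (α × β)) : Prop :=
  M ⊆ E ∧ (∀ e ∈ M, ∀ f ∈ M, e.1 = f.1 → e = f) ∧ ∀ e ∈ M, ∀ f ∈ M, e.2 = f.2 → e = f

/-- A maximum matching: a matching of maximum cardinality. -/
def IsMaxMatching {α β : Type*} (E M : Finset (α × β)) : Prop :=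
  IsMatching E M ∧ ∀ M', IsMatching E M' → M'.card ≤ M.card

/-- `v` is a right-unmatched vertex with respect to the matching `M`. -/
def RightUnmatched {α β : Type*} (M : Finset (α × β)) (v : β) : Prop :=
  ∀ e ∈ M, e.2 ≠ v

/-- The set of right-unmatched vertices of `M`. -/
def unmatchedSet {α β : Type*} (M : Finset (α × β)) : Set β :=
  {v | RightUnmatched M v}

/-- The tip (last vertex) of the path `r :: l`. -/
def stemTip {V : Type*} (r : V) (l : List V) : V :=
  (r :: l).getLast (List.cons_ne_nil r l)

/-- `r :: l` is a state stem: a simple directed path (possibly a single vertex)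
with root `r` and tip `stemTip r l`. -/
def IsStem {V : Type*} (edge : V → V → Prop) (r : V) (l : List V) : Prop :=
  (r :: l).Nodup ∧ List.Chain edge r l

/-- `r :: l` is a simple directed cycle (a self-loop when `l = []`). -/
def IsCycle {V : Type*} (edge : V → V → Prop) (r : V) (l : List V) : Prop :=
  IsStem edge r l ∧ edge (stemTip r l) r

/-- The (directed) edges of the stem `r :: l`. -/
def stemEdges {V : Type*} (r : V) (l : List V) : List (V × V) :=
  (r :: l).zip l

/-- The (directed) edges of the cycle `r :: l`, including the closing edge. -/
def cycleEdges {V : Type*} (r : V) (l : List V) : List (V × V) :=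
  (r :: l).zip (l ++ [r])

/-- The vertices of a stem/cycle encoded as a pair (root, remaining vertices). -/
def pieceVerts {V : Type*} (s : V × List V) : List V :=
  s.1 :: s.2

/-- Reachability (by a directed path) in a digraph. -/
def Reach {V : Type*} (edge : V → V → Prop) : V → V → Prop :=
  Relation.ReflTransGen edge

/-- `S` is a strongly connected component: a nonempty set of mutually reachable
vertices that is maximal with this property. -/
def IsSCC {V : Type*} (edge : V → V → Prop) (S : Set V) : Prop :=
  S.Nonempty ∧ (∀ v ∈ S, ∀ w ∈ S, Reach edge v w) ∧
    ∀ v ∈ S, ∀ w, Reach edge v w → Reach edge w v → w ∈ S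

/-- A non-top-linked SCC: an SCC with no edge entering it from outside. -/
def IsNonTopLinkedSCC {V : Type*} (edge : V → V → Prop) (S : Set V) : Prop :=
  IsSCC edge S ∧ ∀ a b, edge a b → b ∈ S → a ∈ S

/-- `β`: the number of non-top-linked SCCs of `D(Ā)`. -/
noncomputable def numNonTopSCC {n : ℕ} (Ab : Matrix (Fin n) (Fin n) Bool) : ℕ :=
  Set.ncard {S : Set (Fin n) | IsNonTopLinkedSCC (stateEdge Ab) S}

/-- The number of non-top-linked SCCs of `D(Ā)` that are top assignable w.r.t. `M`,
i.e. contain a right-unmatched vertex of `M`. -/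
noncomputable def assignIdx {n : ℕ} (Ab : Matrix (Fin n) (Fin n) Bool) (M : Finset (Fin n × Fin n)) : ℕ :=
  Set.ncard {S : Set (Fin n) | IsNonTopLinkedSCC (stateEdge Ab) S ∧ ∃ v ∈ S, RightUnmatched M v}

/-- `α`: the maximum assignability index, the maximum over all maximum matchings of
the number of top assignable non-top-linked SCCs. -/
noncomputable def maxAssignIdx {n : ℕ} (Ab : Matrix (Fin n) (Fin n) Bool) : ℕ :=
  sSup {k | ∃ M, IsMaxMatching (stateEdgeFinset Ab) M ∧ assignIdx Ab M = k}

/-- The minimum number of dedicated inputs rendering the pattern structurally controllable. -/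
noncomputable def minDedicatedInputs {n : ℕ} (Ab : Matrix (Fin n) (Fin n) Bool) : ℕ :=
  sInf {p : ℕ | ∃ Bb : Matrix (Fin n) (Fin p) Bool, Dedicated Bb ∧ StructurallyControllable Ab Bb}

/-- Any dedicated input pattern `B̄ ∈ {0,*}^{n×p}` rendering `(Ā, B̄)`
structurally controllable satisfies `p ≥ m`, where `m = n − |M*|` is the number of
right-unmatched vertices of a maximum matching `M*` of `B(X, X, E)`. -/
theorem num_dedicated_inputs_ge_num_right_unmatched
    {n p : ℕ} (Ab : Matrix (Fin n) (Fin n) Bool)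
    (M : Finset (Fin n × Fin n)) (hM : IsMaxMatching (stateEdgeFinset Ab) M)
    (Bb : Matrix (Fin n) (Fin p) Bool) (hded : Dedicated Bb)
    (hctrb : StructurallyControllable Ab Bb) :
    n - M.card ≤ p := by
  classical
  obtain ⟨A, B, hA, hB, hrank⟩ := hctrb
  set C : Matrix (Fin n) (Fin n ⊕ Fin p) ℝ := Matrix.fromCols A B with hC
  -- every column of the controllability matrix lies in the range of `C.mulVecLin`
  have hcols : ∀ q : Fin n × Fin p,
      (ctrbMatrix A B).transpose q ∈ LinearMap.range C.mulVecLin := by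
    rintro ⟨k, j⟩
    rcases Nat.eq_zero_or_eq_succ_pred (k : ℕ) with hk | hk
    · refine ⟨Sum.elim 0 (Pi.single j 1), ?_⟩
      rw [Matrix.mulVecLin_apply, hC, Matrix.fromCols_mulVec_sumElim,
        Matrix.mulVec_zero, zero_add, Matrix.mulVec_single_one]
      funext i
      simp [ctrbMatrix, hk, Matrix.transpose_apply]
    · set m := (k : ℕ) - 1 with hm
      refine ⟨Sum.elim (fun r => (A ^ m * B) r j) 0, ?_⟩
      rw [Matrix.mulVecLin_apply, hC, Matrix.fromCols_mulVec_sumElim,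
        Matrix.mulVec_zero, add_zero]
      funext i
      simp only [ctrbMatrix, Matrix.transpose_apply, Matrix.of_apply]
      rw [hk, pow_succ', Matrix.mul_assoc]
      simp [Matrix.mulVec, Matrix.mul_apply, dotProduct, hm]
  have hle : LinearMap.range (ctrbMatrix A B).mulVecLin ≤ LinearMap.range C.mulVecLin := by
    rw [Matrix.range_mulVecLin]
    refine Submodule.span_le.2 ?_
    rintro x ⟨q, rfl⟩
    exact hcols q
  have hfin : Module.finrank ℝ (LinearMap.range C.mulVecLin) = n := by
    have h1 : n ≤ Module.finrank ℝ (LinearMap.range C.mulVecLin) := by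
      have h0 : (ctrbMatrix A B).rank ≤ Module.finrank ℝ (LinearMap.range C.mulVecLin) :=
        Submodule.finrank_mono hle
      rwa [hrank] at h0
    have h2 : Module.finrank ℝ (LinearMap.range C.mulVecLin) ≤
        Module.finrank ℝ (Fin n → ℝ) := Submodule.finrank_le _
    rw [Module.finrank_fin_fun] at h2
    omega
  have htop : LinearMap.range C.mulVecLin = ⊤ :=
    Submodule.eq_top_of_finrank_eq (by rw [hfin, Module.finrank_fin_fun])
  have hspan : Submodule.span ℝ (Set.range C.transpose) = ⊤ := by
    rw [show Set.range C.transpose = Set.range C.col from rfl, ← Matrix.range_mulVecLin]; exact htop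
  obtain ⟨b, hb1, hb2, hb3⟩ := exists_linearIndependent ℝ (Set.range C.transpose)
  rw [hspan] at hb2
  let bs : Module.Basis b ℝ (Fin n → ℝ) := Module.Basis.mk hb3 (by rw [Subtype.range_coe, hb2])
  let eqv : b ≃ Fin n := bs.indexEquiv (Pi.basisFun ℝ (Fin n))
  have hmem : ∀ i : Fin n, ((eqv.symm i : b) : Fin n → ℝ) ∈ Set.range C.transpose :=
    fun i => hb1 (eqv.symm i).2
  let e : Fin n → Fin n ⊕ Fin p := fun i => (hmem i).choose
  have he : ∀ i, C.transpose (e i) = ((eqv.symm i : b) : Fin n → ℝ) := fun i => (hmem i).choose_spec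
  have heinj : Function.Injective e := by
    intro i i' h
    have h2 : ((eqv.symm i : b) : Fin n → ℝ) = ((eqv.symm i' : b) : Fin n → ℝ) := by
      rw [← he i, ← he i', h]
    exact eqv.symm.injective (Subtype.ext h2)
  have hli : LinearIndependent ℝ (fun i => C.transpose (e i)) := by
    have hfe : (fun i => C.transpose (e i)) = (fun i => ((eqv.symm i : b) : Fin n → ℝ)) := funext he
    rw [hfe]
    exact hb3.comp eqv.symm eqv.symm.injective
  set Msub : Matrix (Fin n) (Fin n) ℝ := C.submatrix id e with hMsub
  have hunit : IsUnit Msub := by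
    refine Matrix.linearIndependent_cols_iff_isUnit.1 ?_
    have : Msub.col = fun i => C.transpose (e i) := rfl
    rw [this]; exact hli
  have hdet : Msub.det ≠ 0 := ((Matrix.isUnit_iff_isUnit_det Msub).1 hunit).ne_zero
  have hperm : ∃ σ : Equiv.Perm (Fin n), ∀ i, Msub (σ i) i ≠ 0 := by
    by_contra h
    push_neg at h
    apply hdet
    rw [Matrix.det_apply]
    refine Finset.sum_eq_zero fun σ _ => ?_
    obtain ⟨i, hi⟩ := h σ
    rw [show (∏ x, Msub (σ x) x) = 0 from Finset.prod_eq_zero (Finset.mem_univ i) hi, smul_zero]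
  obtain ⟨σ, hσ⟩ := hperm
  -- extract the matching from the permutation
  let aOf : Fin n → Fin n := fun j => Sum.elim id (fun _ => j) (e j)
  let L : Finset (Fin n) := Finset.univ.filter fun j => (e j).isLeft
  have hLa : ∀ j ∈ L, e j = Sum.inl (aOf j) := by
    intro j hj
    simp only [L, Finset.mem_filter] at hj
    rcases hej : e j with a | bb
    · simp [aOf, hej]
    · rw [hej] at hj; simp at hj
  have hAb : ∀ j ∈ L, Ab (σ j) (aOf j) = true := by
    intro j hj
    have h1 : Msub (σ j) j ≠ 0 := hσ j
    have h2 : Msub (σ j) j = A (σ j) (aOf j) := by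
      show C (σ j) (e j) = A (σ j) (aOf j)
      rw [hLa j hj, hC]
      rfl
    rcases hv : Ab (σ j) (aOf j) with _ | _
    · exact absurd (h2 ▸ hA _ _ hv) h1
    · rfl
  let M' : Finset (Fin n × Fin n) := L.image fun j => (aOf j, σ j)
  have hinjL : Set.InjOn (fun j => (aOf j, σ j)) L := fun j _ j' _ hjj =>
    σ.injective (congrArg Prod.snd hjj)
  have hjeq : ∀ j ∈ L, ∀ j' ∈ L, aOf j = aOf j' → j = j' := by
    intro j hj j' hj' hh
    apply heinj
    rw [hLa j hj, hLa j' hj', hh]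
  have hmatch : IsMatching (stateEdgeFinset Ab) M' := by
    refine ⟨?_, ?_, ?_⟩
    · intro x hx
      simp only [M', Finset.mem_image] at hx
      obtain ⟨j, hj, rfl⟩ := hx
      simp only [stateEdgeFinset, Finset.mem_filter, Finset.mem_univ, true_and]
      exact hAb j hj
    · rintro x hx y hy hxy
      simp only [M', Finset.mem_image] at hx hy
      obtain ⟨j, hj, rfl⟩ := hx
      obtain ⟨j', hj', rfl⟩ := hy
      have : j = j' := hjeq j hj j' hj' hxy
      subst this; rfl
    · rintro x hx y hy hxy
      simp only [M', Finset.mem_image] at hx hy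
      obtain ⟨j, hj, rfl⟩ := hx
      obtain ⟨j', hj', rfl⟩ := hy
      have : j = j' := σ.injective hxy
      subst this; rfl
  have hcardM' : M'.card = L.card := Finset.card_image_of_injOn hinjL
  have hleM : M'.card ≤ M.card := hM.2 M' hmatch
  let R : Finset (Fin n) := Finset.univ.filter fun j => ¬ (e j).isLeft
  have hRcard : R.card ≤ p := by
    have hmap : ∀ j ∈ R, e j ∈ Finset.univ.image (Sum.inr : Fin p → Fin n ⊕ Fin p) := by
      intro j hj
      simp only [R, Finset.mem_filter] at hj
      rcases hej : e j with a | bb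
      · rw [hej] at hj; simp at hj
      · exact Finset.mem_image.2 ⟨bb, Finset.mem_univ _, rfl⟩
    calc R.card ≤ (Finset.univ.image (Sum.inr : Fin p → Fin n ⊕ Fin p)).card :=
          Finset.card_le_card_of_injOn e hmap heinj.injOn
      _ = p := by
          rw [Finset.card_image_of_injective _ Sum.inr_injective, Finset.card_univ,
            Fintype.card_fin]
  have hpart : L.card + R.card = n := by
    have h := Finset.card_filter_add_card_filter_not
      (s := (Finset.univ : Finset (Fin n))) (p := fun j => ((e j).isLeft : Prop))
    simpa [L, R] using h
  omega
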